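/- arXiv:1304.5449 — 2 statements merged into one kernel-verified Lean document; each statement's English description precedes it below -/
import Mathlib

section
/- f →* f' holds if and only if f[w] ≤ f'[w] for every constraint w and f ≠ f'. -/
def DirectSucc {C : Type} (f f' : C → ℕ) : Prop :=
  ∃ w₀ : C, f' w₀ = f w₀ + 1 ∧ ∀ w : C, w ≠ w₀ → f' w = f w

lemma directSucc_le {C : Type} {f f' : C → ℕ} (h : DirectSucc f f') :
    ∀ w, f w ≤ f' w := by
  obtain ⟨w₀, h1, h2⟩ := h
  intro w
  by_cases hw : w = w₀
  · subst hw; omega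
  · rw [h2 w hw]

lemma key {C : Type} [Fintype C] [DecidableEq C] :
    ∀ n (f f' : C → ℕ), (∑ w, (f' w - f w)) = n → (∀ w, f w ≤ f' w) → f ≠ f' →
      Relation.TransGen DirectSucc f f' := by
  intro n
  induction n using Nat.strong_induction_on with
  | _ n ih =>
    intro f f' hn hle hne
    have : ∃ w₀, f w₀ < f' w₀ := by
      by_contra h
      push_neg at h
      exact hne (funext fun w => le_antisymm (hle w) (h w))
    obtain ⟨w₀, hw₀⟩ := this
    set g : C → ℕ := Function.update f w₀ (f w₀ + 1) with hg
    have hstep : DirectSucc f g := by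
      refine ⟨w₀, ?_, ?_⟩
      · simp [hg]
      · intro w hw; simp [hg, Function.update_of_ne hw]
    by_cases hgf : g = f'
    · exact Relation.TransGen.single (hgf ▸ hstep)
    · have hleg : ∀ w, g w ≤ f' w := by
        intro w
        by_cases hw : w = w₀
        · subst hw; simp [hg]; omega
        · simpa [hg, Function.update_of_ne hw] using hle w
      have hsum : (∑ w, (f' w - g w)) < n := by
        rw [← hn]
        refine Finset.sum_lt_sum (fun w _ => ?_) ⟨w₀, Finset.mem_univ _, ?_⟩
        · by_cases hw : w = w₀
          · subst hw; simp [hg]; omega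
          · simp [hg, Function.update_of_ne hw]
        · simp [hg]; omega
      exact (Relation.TransGen.single hstep).trans (ih _ hsum g f' rfl hleg hgf)

lemma fwd {C : Type} {f f' : C → ℕ} (h : Relation.TransGen DirectSucc f f') :
    (∀ w, f w ≤ f' w) ∧ f ≠ f' := by
  induction h with
  | single h =>
    obtain ⟨w₀, h1, h2⟩ := h
    refine ⟨directSucc_le ⟨w₀, h1, h2⟩, fun he => ?_⟩
    have := congrFun he w₀
    omega
  | tail _ h ih =>
    obtain ⟨hle, hne⟩ := ih
    refine ⟨fun w => (hle w).trans (directSucc_le h w), fun he => ?_⟩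
    obtain ⟨w₀, h1, h2⟩ := h
    have := hle w₀
    have := congrFun he w₀
    omega

theorem stmt3 (C : Type) [Fintype C] [Nonempty C] (nbLayers : C → ℕ)
    (f f' : C → ℕ)
    (hf : ∀ w, f w < nbLayers w) (hf' : ∀ w, f' w < nbLayers w) :
    Relation.TransGen DirectSucc f f' ↔ ((∀ w, f w ≤ f' w) ∧ f ≠ f') := by
  classical
  constructor
  · exact fwd
  · rintro ⟨hle, hne⟩
    exact key _ f f' rfl hle hne
end

section
/- Completeness of MUC-guided relaxation: let S be a set of fronts (the 'satisfiable' fronts) that is upward closed in the following weak sense relevant to MUCs: suppose for every front f ∉ S there is a nonempty set M(f) ⊆ C ('MUC constraints') such that every g ∈ S with f ≤ g (coordinatewise) satisfies g[w] > f[w] for some w ∈ M(f). Then any search starting from ⊥ that, for each unsatisfiable front f, enqueues all fronts obtained by incrementing one coordinate in M(f), eventually reaches some element of S whenever there exists g ∈ S — formally: for any g ∈ S, there is a finite sequence ⊥ = f₀, f₁, …, f_m with f_m ∈ S where each f_{i+1} is obtained from f_i by incrementing one coordinate w ∈ M(f_i), and f_i ≤ g for all i. -/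
theorem stmt10 (C : Type) [Fintype C] [DecidableEq C] (nbLayers : C → ℕ)
    (S : Set (C → ℕ)) (M : (C → ℕ) → Set C)
    (hMUC : ∀ f : C → ℕ, (∀ w, f w < nbLayers w) → f ∉ S →
      ∀ g ∈ S, (∀ w, g w < nbLayers w) → (∀ w, f w ≤ g w) → ∃ w ∈ M f, f w < g w) :
    ∀ g ∈ S, (∀ w, g w < nbLayers w) →
      ∃ (m : ℕ) (seq : ℕ → C → ℕ),
        seq 0 = (fun _ => 0) ∧
        seq m ∈ S ∧
        (∀ i ≤ m, ∀ w, seq i w ≤ g w) ∧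
        (∀ i < m, seq i ∉ S ∧
          ∃ w ∈ M (seq i), seq (i + 1) = Function.update (seq i) w (seq i w + 1)) := by
  intro g hgS hglt
  classical
  -- auxiliary claim by strong induction on the remaining gap
  have aux : ∀ n : ℕ, ∀ f : C → ℕ, (∀ w, f w ≤ g w) →
      (∑ w, (g w - f w)) ≤ n →
      ∃ (m : ℕ) (seq : ℕ → C → ℕ),
        seq 0 = f ∧ seq m ∈ S ∧ (∀ i ≤ m, ∀ w, seq i w ≤ g w) ∧
        (∀ i < m, seq i ∉ S ∧
          ∃ w ∈ M (seq i), seq (i + 1) = Function.update (seq i) w (seq i w + 1)) := by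
    intro n
    induction n with
    | zero =>
      intro f hle hsum
      have hfg : f = g := by
        funext w
        have : g w - f w = 0 := by
          have := Finset.sum_eq_zero_iff.mp (Nat.le_zero.mp hsum) w (Finset.mem_univ w)
          exact this
        have := hle w; omega
      subst hfg
      exact ⟨0, fun _ => f, rfl, hgS, fun i _ w => le_rfl, fun i hi => absurd hi (Nat.not_lt_zero i)⟩
    | succ n ih =>
      intro f hle hsum
      by_cases hfS : f ∈ S
      · exact ⟨0, fun _ => f, rfl, hfS, fun i _ w => hle w, fun i hi => absurd hi (Nat.not_lt_zero i)⟩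
      · have hflt : ∀ w, f w < nbLayers w := fun w => lt_of_le_of_lt (hle w) (hglt w)
        obtain ⟨w, hwM, hwlt⟩ := hMUC f hflt hfS g hgS hglt hle
        set f' := Function.update f w (f w + 1) with hf'
        have hle' : ∀ v, f' v ≤ g v := by
          intro v
          by_cases hv : v = w
          · subst hv; simp [hf', Function.update_self]; omega
          · simp [hf', Function.update_of_ne hv]; exact hle v
        have hsum' : (∑ v, (g v - f' v)) ≤ n := by
          have h1 : (∑ v, (g v - f' v)) + 1 ≤ ∑ v, (g v - f v) := by
            have : (∑ v, (g v - f' v)) + 1 = ∑ v, ((g v - f' v) + if v = w then 1 else 0) := by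
              rw [Finset.sum_add_distrib, Finset.sum_ite_eq' Finset.univ w (fun _ => 1)]
              simp
            rw [this]
            apply Finset.sum_le_sum
            intro v _
            by_cases hv : v = w
            · subst hv; simp [hf', Function.update_self]; omega
            · simp [hf', Function.update_of_ne hv, hv]
          omega
        obtain ⟨m', seq', h0', hm', hleq', hstep'⟩ := ih f' hle' hsum'
        refine ⟨m' + 1, fun i => if i = 0 then f else seq' (i - 1), by simp, by simp [hm'], ?_, ?_⟩
        · intro i hi v
          cases i with
          | zero => simpa using hle v
          | succ j => simpa using hleq' j (by omega) v
        · intro i hi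
          cases i with
          | zero =>
            refine ⟨by simpa using hfS, w, by simpa using hwM, ?_⟩
            simp [h0', hf']
          | succ j =>
            have hj : j < m' := by omega
            obtain ⟨hns, v, hvM, heq⟩ := hstep' j hj
            exact ⟨by simpa using hns, v, by simpa using hvM, by simpa using heq⟩
  exact aux (∑ w, (g w - 0)) (fun _ => 0) (fun w => Nat.zero_le _) le_rfl
end
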